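/- arXiv:1403.3458 — 3 statements merged into one kernel-verified Lean document; each statement's English description precedes it below -/
import Mathlib

section
/- Let B be a simple polygon whose boundary is the union of a single edge g (the gate) and a polygonal chain, and let s and t both lie in B. Then for any shortest obstacle-avoiding L1 path π between s and t in the plane (where the complement of B outside g may contain obstacles), there exists an L1 shortest s-t path that lies entirely in B. In particular, replacing the portion of π between its first and last intersection points with g by the straight segment between those two points yields an s-t path inside B of no greater L1 length. -/
open scoped Classical

/-- Points in the plane. -/
abbrev Pt : Type := ℝ × ℝ

/-- The L1 distance between two points of the plane. -/
noncomputable def d1 (p q : Pt) : ℝ := |p.1 - q.1| + |p.2 - q.2|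

/-- The L1 length of a polygonal path given by its list of vertices. -/
noncomputable def len : List Pt → ℝ
  | [] => 0
  | [_] => 0
  | p :: q :: r => d1 p q + len (q :: r)

/-- A polygonal path is monotone in the coordinate `f` if that coordinate is
(weakly) monotone along the path, in one of the two directions. -/
def MonoCoord (f : Pt → ℝ) (L : List Pt) : Prop :=
  L.Chain' (fun a b => f a ≤ f b) ∨ L.Chain' (fun a b => f b ≤ f a)

/-- A polygonal path is xy-monotone if it is both x-monotone and y-monotone. -/
def XYMono (L : List Pt) : Prop := MonoCoord Prod.fst L ∧ MonoCoord Prod.snd L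

/-- A polygonal path lies in a set `B` if all its vertices and all its
segments lie in `B`. -/
def PathIn (B : Set Pt) (L : List Pt) : Prop :=
  (∀ p ∈ L, p ∈ B) ∧ L.Chain' (fun a b => segment ℝ a b ⊆ B)

lemma d1_self (p : Pt) : d1 p p = 0 := by simp [d1]

lemma d1_triangle (p q r : Pt) : d1 p r ≤ d1 p q + d1 q r := by
  unfold d1
  have h1 : |p.1 - r.1| ≤ |p.1 - q.1| + |q.1 - r.1| := abs_sub_le _ _ _
  have h2 : |p.2 - r.2| ≤ |p.2 - q.2| + |q.2 - r.2| := abs_sub_le _ _ _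
  linarith

lemma d1_nonneg (p q : Pt) : 0 ≤ d1 p q := by
  unfold d1; positivity

lemma len_nonneg : ∀ L : List Pt, 0 ≤ len L
  | [] => le_refl 0
  | [_] => le_refl 0
  | p :: q :: r => by
      have := len_nonneg (q :: r)
      have := d1_nonneg p q
      simp only [len]; linarith

lemma len_append : ∀ (L M : List Pt) (x y : Pt), L.getLast? = some x →
    M.head? = some y → len (L ++ M) = len L + d1 x y + len M
  | [], _, _, _, h, _ => by simp at h
  | [p], M, x, y, hL, hM => by
      simp only [List.getLast?_singleton, Option.some.injEq] at hL
      subst hL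
      cases M with
      | nil => simp at hM
      | cons q M' =>
          simp only [List.head?_cons, Option.some.injEq] at hM
          subst hM
          simp [len]
  | p :: q :: r, M, x, y, hL, hM => by
      have hL' : (q :: r).getLast? = some x := by
        rw [← hL]; rfl
      have ih := len_append (q :: r) M x y hL' hM
      show len (p :: ((q :: r) ++ M)) = _
      have : len (p :: ((q :: r) ++ M)) = d1 p q + len ((q :: r) ++ M) := by
        cases r <;> rfl
      rw [this, ih]
      simp [len]; ring

lemma d1_le_len : ∀ (L : List Pt) (x y : Pt), L.head? = some x →
    L.getLast? = some y → d1 x y ≤ len L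
  | [], _, _, h, _ => by simp at h
  | [p], x, y, hh, hl => by
      simp only [List.head?_cons, Option.some.injEq] at hh
      simp only [List.getLast?_singleton, Option.some.injEq] at hl
      subst hh; subst hl
      simp [len, d1_self]
  | p :: q :: r, x, y, hh, hl => by
      simp only [List.head?_cons, Option.some.injEq] at hh
      have hl' : (q :: r).getLast? = some y := by rw [← hl]; rfl
      have ih := d1_le_len (q :: r) q y rfl hl'
      have htri := d1_triangle p q y
      rw [← hh]
      simp only [len]
      linarith

/-- `B` is a simple polygon (a bay) whose boundary shares exactly
the gate `g = segment a b` with the outside; `s, t ∈ B`. Any s-t path `π`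
decomposes as `P1 ++ P2 ++ P3` where `P1 ⊆ B` goes from `s` to the first
gate-crossing point `u ∈ g`, `P2` is the (possibly outside) portion from `u`
to the last gate-crossing point `v ∈ g`, and `P3 ⊆ B` goes from `v` to `t`.
Replacing the middle portion by the straight segment `uv ⊆ g` yields an s-t
path lying entirely in `B` of no greater L1 length; in particular if `π` was a
shortest obstacle-avoiding path, the new path is an L1 shortest s-t path. -/
theorem bay_shortest_path_stays_in_bay (B : Set Pt) (a b s t u v : Pt)
    (P1 P2 P3 : List Pt)
    (hgate : segment ℝ a b ⊆ B) (hs : s ∈ B) (ht : t ∈ B)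
    (hu : u ∈ segment ℝ a b) (hv : v ∈ segment ℝ a b)
    (hP1 : PathIn B P1) (hP3 : PathIn B P3)
    (h1h : P1.head? = some s) (h1l : P1.getLast? = some u)
    (h2h : P2.head? = some u) (h2l : P2.getLast? = some v)
    (h3h : P3.head? = some v) (h3l : P3.getLast? = some t) :
    PathIn B (P1 ++ P3) ∧
    (P1 ++ P3).head? = some s ∧ (P1 ++ P3).getLast? = some t ∧
    len (P1 ++ P3) ≤ len (P1 ++ P2 ++ P3) ∧
    ((∀ M : List Pt, M.head? = some s → M.getLast? = some t →
        len (P1 ++ P2 ++ P3) ≤ len M) →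
      ∀ M : List Pt, M.head? = some s → M.getLast? = some t →
        len (P1 ++ P3) ≤ len M) := by
  have hP1ne : P1 ≠ [] := by intro h; rw [h] at h1h; simp at h1h
  have hP2ne : P2 ≠ [] := by intro h; rw [h] at h2h; simp at h2h
  have hP3ne : P3 ≠ [] := by intro h; rw [h] at h3h; simp at h3h
  have huv : segment ℝ u v ⊆ B :=
    fun z hz => hgate ((convex_segment a b).segment_subset hu hv hz)
  obtain ⟨hP1m, hP1c⟩ := hP1
  obtain ⟨hP3m, hP3c⟩ := hP3
  have hpath : PathIn B (P1 ++ P3) := by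
    constructor
    · intro p hp
      rcases List.mem_append.mp hp with h | h
      · exact hP1m p h
      · exact hP3m p h
    · show List.IsChain _ (P1 ++ P3); rw [List.isChain_append]
      refine ⟨hP1c, hP3c, ?_⟩
      intro x hx y hy
      rw [h1l] at hx; rw [h3h] at hy
      simp only [Option.mem_def, Option.some.injEq] at hx hy
      subst hx; subst hy
      exact huv
  have hhead : (P1 ++ P3).head? = some s := by
    cases P1 with
    | nil => exact absurd rfl hP1ne
    | cons p P1' => simpa using h1h
  have hlast : (P1 ++ P3).getLast? = some t := by
    rw [List.getLast?_append_of_ne_nil _ hP3ne]; exact h3l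
  have e13 : len (P1 ++ P3) = len P1 + d1 u v + len P3 :=
    len_append P1 P3 u v h1l h3h
  have e12 : len (P1 ++ P2) = len P1 + d1 u u + len P2 :=
    len_append P1 P2 u u h1l h2h
  have h12l : (P1 ++ P2).getLast? = some v := by
    rw [List.getLast?_append_of_ne_nil _ hP2ne]; exact h2l
  have e123 : len ((P1 ++ P2) ++ P3) = len (P1 ++ P2) + d1 v v + len P3 :=
    len_append (P1 ++ P2) P3 v v h12l h3h
  have hd2 : d1 u v ≤ len P2 := d1_le_len P2 u v h2h h2l
  have hlen : len (P1 ++ P3) ≤ len (P1 ++ P2 ++ P3) := by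
    rw [e13, e123, e12, d1_self, d1_self]; linarith
  refine ⟨hpath, hhead, hlast, hlen, ?_⟩
  intro hmin M hMh hMl
  exact le_trans hlen (hmin M hMh hMl)
end

section
/- Let s be a point, and let a be a point to the northeast of s on a vertical line l(v), such that a is horizontally visible to the vertical line through s (meaning the horizontal segment from a leftward to the vertical line through s avoids all obstacles). Let l(v') be any vertical line strictly between the vertical line through s and l(v), and suppose q is an obstacle vertex horizontally visible to a with q on the opposite side of l(v) (so that the horizontal segment from q through l(v') and l(v) reaching a is obstacle-free at the height of a). Then q is horizontally visible to l(v'), and for any point b on l(v') with s.y ≤ b.y ≤ a.y that is visible appropriately, the concatenation s → s_h(l(v')) → b → q_h(l(v')) → a of vertical and horizontal segments on l(v') is an xy-monotone path from s to a, hence an L1 shortest s-to-a path. -/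
open scoped Classical

lemma mem_seg_of (p r m : Pt) (t : ℝ) (h0 : 0 ≤ t) (h1 : t ≤ 1)
    (hm : (1-t) • p + t • r = m) : m ∈ segment ℝ p r :=
  ⟨1-t, t, by linarith, h0, by ring, hm⟩

lemma mem_hseg {x1 x2 xb y : ℝ} (h1 : x1 ≤ xb) (h2 : xb ≤ x2) :
    ((xb, y) : Pt) ∈ segment ℝ ((x1,y):Pt) ((x2,y):Pt) := by
  rcases eq_or_lt_of_le (h1.trans h2) with h | h
  · have : xb = x1 := le_antisymm (h ▸ h2) h1
    subst this; exact left_mem_segment ℝ _ _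
  · refine mem_seg_of _ _ _ ((xb - x1)/(x2 - x1)) (div_nonneg (by linarith) (by linarith)) ?_ ?_
    · rw [div_le_one (by linarith)]; linarith
    · have hne : x2 - x1 ≠ 0 := by linarith
      simp only [Prod.smul_mk, Prod.mk_add_mk, Prod.ext_iff, smul_eq_mul]
      constructor <;> field_simp <;> ring

lemma mem_vseg {y1 y2 yb x : ℝ} (h1 : y1 ≤ yb) (h2 : yb ≤ y2) :
    ((x, yb) : Pt) ∈ segment ℝ ((x,y1):Pt) ((x,y2):Pt) := by
  rcases eq_or_lt_of_le (h1.trans h2) with h | h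
  · have : yb = y1 := le_antisymm (h ▸ h2) h1
    subst this; exact left_mem_segment ℝ _ _
  · refine mem_seg_of _ _ _ ((yb - y1)/(y2 - y1)) (div_nonneg (by linarith) (by linarith)) ?_ ?_
    · rw [div_le_one (by linarith)]; linarith
    · have hne : y2 - y1 ≠ 0 := by linarith
      simp only [Prod.smul_mk, Prod.mk_add_mk, Prod.ext_iff, smul_eq_mul]
      constructor <;> field_simp <;> ring

lemma len_ge (L : List Pt) : ∀ s a : Pt, L.head? = some s → L.getLast? = some a →
    d1 s a ≤ len L := by
  induction L with
  | nil => intro s a hs; simp at hs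
  | cons x L ih =>
    intro s a hs hla
    simp at hs
    subst hs
    cases L with
    | nil =>
      simp at hla
      subst hla
      simp [d1, len]
    | cons y r =>
      rw [List.getLast?_cons_cons] at hla
      have h2 : d1 y a ≤ len (y :: r) := ih y a rfl hla
      calc d1 x a ≤ d1 x y + d1 y a := d1_triangle x y a
        _ ≤ d1 x y + len (y :: r) := by linarith
        _ = len (x :: y :: r) := rfl

/-- `F` is the free space. `a` lies to the northeast of `s` on
the vertical line `x = xv`, is horizontally visible to the vertical line
through `s`; `xv'` is strictly between `s.1` and `xv`; `q` is an obstacle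
vertex with `q.2 = a.2`, `q.1 < xv'`, whose horizontal segment to `a` is
obstacle-free. Then `q` is horizontally visible to the line `x = xv'`, and for
any point `b` on that line with `s.2 ≤ b.2 ≤ a.2` (with the stated visibility
of the connecting segments), the concatenation
`s → s_h(l(v')) → b → q_h(l(v')) → a` is an xy-monotone path in `F` from `s`
to `a`, hence an L1 shortest s-to-a path. -/
theorem reroute_through_intermediate_cutline (F : Set Pt) (s a q b : Pt)
    (xv xv' : ℝ)
    (ha : a.1 = xv) (hbetween : s.1 < xv' ∧ xv' < xv)
    (hne : s.1 ≤ a.1 ∧ s.2 ≤ a.2)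
    (havis : segment ℝ ((s.1, a.2) : Pt) a ⊆ F)
    (hq : q.2 = a.2 ∧ q.1 < xv' ∧ segment ℝ q a ⊆ F)
    (hb : b.1 = xv' ∧ s.2 ≤ b.2 ∧ b.2 ≤ a.2)
    (hs1 : segment ℝ s ((xv', s.2) : Pt) ⊆ F)
    (hvert : segment ℝ ((xv', s.2) : Pt) ((xv', a.2) : Pt) ⊆ F) :
    segment ℝ q ((xv', q.2) : Pt) ⊆ F ∧
    PathIn F [s, (xv', s.2), b, (xv', a.2), a] ∧
    XYMono [s, (xv', s.2), b, (xv', a.2), a] ∧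
    len [s, (xv', s.2), b, (xv', a.2), a] = d1 s a ∧
    ∀ M : List Pt, PathIn F M → M.head? = some s → M.getLast? = some a →
      len [s, (xv', s.2), b, (xv', a.2), a] ≤ len M := by
  obtain ⟨hb1, hb2, hb3⟩ := hb
  obtain ⟨hq1, hq2, hq3⟩ := hq
  obtain ⟨hbt1, hbt2⟩ := hbetween
  obtain ⟨hne1, hne2⟩ := hne
  have hqa : xv' ≤ a.1 := by linarith
  -- memberships
  have hqeta : q = ((q.1, a.2) : Pt) := by rw [← hq1]
  have hqm : ((xv', q.2) : Pt) ∈ segment ℝ q a := by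
    rw [hq1, hqeta]
    nth_rewrite 3 [show a = ((a.1, a.2) : Pt) from rfl]
    exact mem_hseg (le_of_lt hq2) hqa
  have part1 : segment ℝ q ((xv', q.2) : Pt) ⊆ segment ℝ q a :=
    (convex_segment q a).segment_subset (left_mem_segment ℝ q a) hqm
  have hbeta : b = ((xv', b.2) : Pt) := by rw [← hb1]
  have hbm : b ∈ segment ℝ ((xv', s.2) : Pt) ((xv', a.2) : Pt) := by
    rw [hbeta]; exact mem_vseg hb2 hb3
  have hvm : ((xv', a.2) : Pt) ∈ segment ℝ ((s.1, a.2) : Pt) a := by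
    nth_rewrite 2 [show a = ((a.1, a.2) : Pt) from rfl]
    exact mem_hseg (le_of_lt hbt1) hqa
  have hseg2 : segment ℝ ((xv', s.2) : Pt) b ⊆ F :=
    fun p hp => hvert ((convex_segment _ _).segment_subset
      (left_mem_segment ℝ _ _) hbm hp)
  have hseg3 : segment ℝ b ((xv', a.2) : Pt) ⊆ F :=
    fun p hp => hvert ((convex_segment _ _).segment_subset
      hbm (right_mem_segment ℝ _ _) hp)
  have hseg4 : segment ℝ ((xv', a.2) : Pt) a ⊆ F :=
    fun p hp => havis ((convex_segment _ _).segment_subset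
      hvm (right_mem_segment ℝ _ _) hp)
  refine ⟨fun p hp => hq3 (part1 hp), ?_, ?_, ?_, ?_⟩
  · constructor
    · intro p hp
      simp only [List.mem_cons, List.not_mem_nil, or_false] at hp
      rcases hp with rfl | rfl | rfl | rfl | rfl
      · exact hs1 (left_mem_segment ℝ _ _)
      · exact hs1 (right_mem_segment ℝ _ _)
      · exact hvert hbm
      · exact hvert (right_mem_segment ℝ _ _)
      · exact havis (right_mem_segment ℝ _ _)
    · exact List.isChain_cons_cons.mpr ⟨hs1, List.isChain_cons_cons.mpr ⟨hseg2,
        List.isChain_cons_cons.mpr ⟨hseg3, List.isChain_cons_cons.mpr ⟨hseg4,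
        List.isChain_singleton a⟩⟩⟩⟩
  · constructor
    · left
      simp only [List.Chain', List.isChain_cons_cons, List.isChain_singleton, and_true]
      exact ⟨le_of_lt hbt1, le_of_eq hb1.symm, le_of_eq hb1, by linarith⟩
    · left
      simp only [List.Chain', List.isChain_cons_cons, List.isChain_singleton, and_true]
      exact ⟨le_refl _, hb2, hb3, le_refl _⟩
  · simp only [len, d1, hb1]
    rw [abs_of_nonpos (a := s.1 - xv') (by linarith),
        abs_of_nonpos (a := s.2 - b.2) (by linarith),
        abs_of_nonpos (a := b.2 - a.2) (by linarith),
        abs_of_nonpos (a := xv' - a.1) (by linarith),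
        abs_of_nonpos (a := s.1 - a.1) (by linarith),
        abs_of_nonpos (a := s.2 - a.2) (by linarith)]
    simp
    ring
  · intro M _ hh hl
    have := len_ge M s a hh hl
    have heq : len [s, ((xv', s.2) : Pt), b, ((xv', a.2) : Pt), a] = d1 s a := by
      simp only [len, d1, hb1]
      rw [abs_of_nonpos (a := s.1 - xv') (by linarith),
          abs_of_nonpos (a := s.2 - b.2) (by linarith),
          abs_of_nonpos (a := b.2 - a.2) (by linarith),
          abs_of_nonpos (a := xv' - a.1) (by linarith),
          abs_of_nonpos (a := s.1 - a.1) (by linarith),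
          abs_of_nonpos (a := s.2 - a.2) (by linarith)]
      simp
      ring
    rw [heq]
    exact this
end

section
/- Let Q be a connected polygonal region and let V(Q) be a finite set of points on ∂Q that includes every extreme vertex of Q (a vertex both of whose incident boundary edges lie on the same side of the vertical line through it, or the same side of the horizontal line through it). Then between any two points of V(Q) that are consecutive along ∂Q, the boundary arc of ∂Q containing no other point of V(Q) is xy-monotone. -/
open scoped Classical

/-- The set of points traced out by a polygonal path. -/
def trace : List Pt → Set Pt
  | [] => ∅
  | [p] => {p}
  | p :: q :: r => segment ℝ p q ∪ trace (q :: r)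

private lemma chain_of_local (g : Pt → ℝ) (M : List Pt)
    (h : ∀ t, t + 2 < M.length →
      g (M.getD t (0,0)) ≤ g (M.getD (t+1) (0,0)) →
      g (M.getD (t+1) (0,0)) ≤ g (M.getD (t+2) (0,0)))
    (h0 : 1 < M.length → g (M.getD 0 (0,0)) ≤ g (M.getD 1 (0,0))) :
    M.Chain' (fun a b => g a ≤ g b) := by
  have key : ∀ t, t + 1 < M.length → g (M.getD t (0,0)) ≤ g (M.getD (t+1) (0,0)) := by
    intro t
    induction t with
    | zero => intro ht; exact h0 ht
    | succ s ih => intro ht; exact h s ht (ih (by omega))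
  unfold List.Chain'
  rw [List.isChain_iff_getElem]
  intro t ht
  have h1 : t < M.length := by omega
  have h2 : t + 1 < M.length := by omega
  have := key t h2
  rw [List.getD_eq_getElem _ _ h1, List.getD_eq_getElem _ _ h2] at this
  exact this

private lemma mono_of_local (g : Pt → ℝ) (M : List Pt) (hlen : 1 < M.length)
    (h : ∀ t, t + 2 < M.length →
      (g (M.getD t (0,0)) ≤ g (M.getD (t+1) (0,0)) →
        g (M.getD (t+1) (0,0)) < g (M.getD (t+2) (0,0))) ∧
      (g (M.getD (t+1) (0,0)) ≤ g (M.getD t (0,0)) →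
        g (M.getD (t+2) (0,0)) < g (M.getD (t+1) (0,0)))) :
    MonoCoord g M := by
  rcases le_total (g (M.getD 0 (0,0))) (g (M.getD 1 (0,0))) with h01 | h01
  · left
    exact chain_of_local g M (fun t ht hle => le_of_lt ((h t ht).1 hle)) (fun _ => h01)
  · right
    have := chain_of_local (fun p => -(g p)) M
      (fun t ht hle => by
        have hle' : g (M.getD (t+1) (0,0)) ≤ g (M.getD t (0,0)) := by simpa using hle
        have := (h t ht).2 hle'
        simpa using this.le)
      (fun _ => by simpa using h01)
    exact this.imp (fun a b hab => by simpa using hab)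

/-- `Q` is a region bounded by the simple closed polygonal
curve with vertex list `L` (closed: first = last vertex; simple: no repeated
vertices otherwise), and `S` is a set of boundary points containing every
extreme vertex of `Q` — a vertex whose two incident edges lie on the same
closed side of the vertical line through it, or of the horizontal line
through it. Then the boundary arc between any two points of `S` consecutive
along `∂Q` (i.e. containing no point of `S` in its interior) is xy-monotone. -/
theorem arcs_between_extreme_vertices_are_monotone (Q : Set Pt)
    (L : List Pt) (S : Set Pt)
    (hclosed : L.head? = L.getLast?) (hsimple : L.dropLast.Nodup)
    (hbd : ∀ x ∈ trace L, x ∈ frontier Q)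
    (hext : ∀ k, k + 2 < L.length →
      ((((L.getD k (0, 0)).1 ≤ (L.getD (k+1) (0, 0)).1 ∧
         (L.getD (k+2) (0, 0)).1 ≤ (L.getD (k+1) (0, 0)).1) ∨
        ((L.getD (k+1) (0, 0)).1 ≤ (L.getD k (0, 0)).1 ∧
         (L.getD (k+1) (0, 0)).1 ≤ (L.getD (k+2) (0, 0)).1)) ∨
       (((L.getD k (0, 0)).2 ≤ (L.getD (k+1) (0, 0)).2 ∧
         (L.getD (k+2) (0, 0)).2 ≤ (L.getD (k+1) (0, 0)).2) ∨
        ((L.getD (k+1) (0, 0)).2 ≤ (L.getD k (0, 0)).2 ∧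
         (L.getD (k+1) (0, 0)).2 ≤ (L.getD (k+2) (0, 0)).2))) →
      L.getD (k+1) (0, 0) ∈ S) :
    ∀ i j : ℕ, i < j → j < L.length →
      L.getD i (0, 0) ∈ S → L.getD j (0, 0) ∈ S →
      (∀ k, i < k → k < j → L.getD k (0, 0) ∉ S) →
      XYMono ((L.drop i).take (j - i + 1)) := by
  
  intro i j hij hjL hiS hjS hmid
  set M : List Pt := (L.drop i).take (j - i + 1) with hM
  have hMlen : M.length = j - i + 1 := by
    simp only [hM, List.length_take, List.length_drop]
    omega
  have hMget : ∀ t, t < j - i + 1 → M.getD t (0,0) = L.getD (i+t) (0,0) := by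
    intro t ht
    have h1 : t < M.length := by omega
    have h2 : i + t < L.length := by omega
    rw [List.getD_eq_getElem _ _ h1, List.getD_eq_getElem _ _ h2]
    simp only [hM, List.getElem_take, List.getElem_drop]
  have hnotext : ∀ t, t + 2 < M.length →
      ¬ ((((L.getD (i+t) (0, 0)).1 ≤ (L.getD (i+t+1) (0, 0)).1 ∧
         (L.getD (i+t+2) (0, 0)).1 ≤ (L.getD (i+t+1) (0, 0)).1) ∨
        ((L.getD (i+t+1) (0, 0)).1 ≤ (L.getD (i+t) (0, 0)).1 ∧
         (L.getD (i+t+1) (0, 0)).1 ≤ (L.getD (i+t+2) (0, 0)).1)) ∨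
       (((L.getD (i+t) (0, 0)).2 ≤ (L.getD (i+t+1) (0, 0)).2 ∧
         (L.getD (i+t+2) (0, 0)).2 ≤ (L.getD (i+t+1) (0, 0)).2) ∨
        ((L.getD (i+t+1) (0, 0)).2 ≤ (L.getD (i+t) (0, 0)).2 ∧
         (L.getD (i+t+1) (0, 0)).2 ≤ (L.getD (i+t+2) (0, 0)).2))) := by
    intro t ht hc
    have hk : i + t + 2 < L.length := by omega
    exact hmid (i+t+1) (by omega) (by omega) (hext (i+t) hk hc)
  have hx : MonoCoord Prod.fst M := by
    apply mono_of_local _ _ (by omega)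
    intro t ht
    have hne := hnotext t ht
    rw [hMget t (by omega), hMget (t+1) (by omega), hMget (t+2) (by omega)]
    push_neg at hne
    obtain ⟨⟨hx1, hx2⟩, _⟩ := hne
    have hsx : i + t + 1 = i + (t + 1) := by ring
    have hsx2 : i + t + 2 = i + (t + 2) := by ring
    rw [hsx, hsx2] at hx1 hx2
    exact ⟨hx1, hx2⟩
  have hy : MonoCoord Prod.snd M := by
    apply mono_of_local _ _ (by omega)
    intro t ht
    have hne := hnotext t ht
    rw [hMget t (by omega), hMget (t+1) (by omega), hMget (t+2) (by omega)]
    push_neg at hne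
    obtain ⟨_, hy1, hy2⟩ := hne
    have hsx : i + t + 1 = i + (t + 1) := by ring
    have hsx2 : i + t + 2 = i + (t + 2) := by ring
    rw [hsx, hsx2] at hy1 hy2
    exact ⟨hy1, hy2⟩
  exact ⟨hx, hy⟩
end
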